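/- arXiv:2401.15831 — 2 statements merged into one kernel-verified Lean document; each statement's English description precedes it below -/
import Mathlib

section
/- Let N ≥ 2, let μ₁,…,μ_N > 0 be constants, let P₁,…,P_N ∈ ℕ, and suppose the real constants β_{ij} = β_{ji} (for i ≠ j) satisfy β_{ij} ≥ 0. If u₁,…,u_N : [0,∞) → ℝ are functions of class C² such that for every j one has u_j(0) = 0, |u_j(t)| ≤ 1 for all t ∈ [0,∞), u_j is either identically zero or changes sign at most P_j times, and −u_j'' = μ_j u_j³ + Σ_{i≠j} β_{ij} u_i² u_j holds pointwise on [0,∞), then u_j ≡ 0 for every j = 1,…,N. -/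
open scoped BigOperators

/-- There are `k + 1` increasing points of `I` on which `u` successively changes sign
`k` times. -/
def SignChangeWitness1D (u : ℝ → ℝ) (I : Set ℝ) (k : ℕ) : Prop :=
  ∃ t : Fin (k + 1) → ℝ, (∀ i, t i ∈ I) ∧ StrictMono t ∧
    (∀ i : Fin k, u (t i.castSucc) * u (t i.succ) < 0)

/-- `u` changes sign at most `P` times on `I`. -/
def ChangesSignAtMost1D (u : ℝ → ℝ) (I : Set ℝ) (P : ℕ) : Prop :=
  ¬ SignChangeWitness1D u I (P + 1)

open Classical in
noncomputable def nextPt (u : ℝ → ℝ) (x : ℝ) : ℝ :=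
  if h : ∃ y, x < y ∧ u x * u y < 0 then h.choose else x + 1

open Classical in
lemma nextPt_spec {u : ℝ → ℝ} {x : ℝ} (h : ∃ y, x < y ∧ u x * u y < 0) :
    x < nextPt u x ∧ u x * u (nextPt u x) < 0 := by
  rw [nextPt, dif_pos h]; exact h.choose_spec

/-- If `u` changes sign finitely many times on `[0,∞)`, then eventually it has a fixed sign. -/
lemma eventual_sign (u : ℝ → ℝ) (P : ℕ)
    (h : ChangesSignAtMost1D u (Set.Ici 0) P) :
    ∃ T, 0 ≤ T ∧ ((∀ t, T ≤ t → 0 ≤ u t) ∨ (∀ t, T ≤ t → u t ≤ 0)) := by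
  by_contra hcon
  push_neg at hcon
  have key : ∀ x, 0 ≤ x → u x ≠ 0 → ∃ y, x < y ∧ u x * u y < 0 := by
    intro x hx hux
    rcases hux.lt_or_gt with hneg | hpos
    · obtain ⟨y, hy, huy⟩ := (hcon x hx).2
      have hxy : x < y := lt_of_le_of_ne hy (by rintro rfl; linarith)
      exact ⟨y, hxy, mul_neg_of_neg_of_pos hneg huy⟩
    · obtain ⟨y, hy, huy⟩ := (hcon x hx).1
      have hxy : x < y := lt_of_le_of_ne hy (by rintro rfl; linarith)
      exact ⟨y, hxy, mul_neg_of_pos_of_neg hpos huy⟩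
  obtain ⟨x0, hx0le, hx0⟩ := (hcon 0 le_rfl).2
  set f : ℕ → ℝ := fun n => (nextPt u)^[n] x0 with hf
  have hfs : ∀ n, f (n + 1) = nextPt u (f n) := fun n =>
    Function.iterate_succ_apply' _ _ _
  have hinv : ∀ n, 0 ≤ f n ∧ u (f n) ≠ 0 := by
    intro n
    induction n with
    | zero => exact ⟨hx0le, ne_of_gt hx0⟩
    | succ n ih =>
      have hs := nextPt_spec (key _ ih.1 ih.2)
      rw [← hfs] at hs
      refine ⟨le_trans ih.1 hs.1.le, fun h0 => ?_⟩
      rw [h0, mul_zero] at hs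
      exact absurd hs.2 (lt_irrefl 0)
  have hcons : ∀ n, f n < f (n + 1) ∧ u (f n) * u (f (n + 1)) < 0 := by
    intro n
    have hs := nextPt_spec (key _ (hinv n).1 (hinv n).2)
    rw [← hfs] at hs
    exact hs
  have hmono : StrictMono f := strictMono_nat_of_lt_succ fun n => (hcons n).1
  apply h
  refine ⟨fun i => f i.val, fun i => Set.mem_Ici.mpr (hinv i.val).1,
    fun i j hij => hmono (Fin.lt_def.mp hij), fun i => ?_⟩
  simpa using (hcons i.val).2

/-- If `u ≥ 0` on `[T,∞)`, is bounded-free `C²`-type data with `u'' = -(u g)`,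
`g ≥ μ u²`, then `u ≡ 0` on `[T,∞)`. -/
lemma vanish_of_nonneg {u v w g : ℝ → ℝ} {μ T : ℝ} (hμ : 0 < μ)
    (hu_cont : ContinuousOn u (Set.Ici T)) (hv_cont : ContinuousOn v (Set.Ici T))
    (huv : ∀ t ∈ Set.Ioi T, HasDerivAt u (v t) t)
    (hvw : ∀ t ∈ Set.Ioi T, HasDerivAt v (w t) t)
    (hg : ∀ t ∈ Set.Ici T, μ * u t ^ 2 ≤ g t)
    (heq : ∀ t ∈ Set.Ici T, w t = -(u t * g t))
    (hsign : ∀ t ∈ Set.Ici T, 0 ≤ u t) :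
    ∀ t ∈ Set.Ici T, u t = 0 := by
  have hg0 : ∀ t ∈ Set.Ici T, 0 ≤ g t := fun t ht => le_trans (by positivity) (hg t ht)
  have hw0 : ∀ t ∈ Set.Ici T, w t ≤ 0 := by
    intro t ht
    rw [heq t ht]
    simpa using mul_nonneg (hsign t ht) (hg0 t ht)
  have hv_anti : AntitoneOn v (Set.Ici T) := by
    apply antitoneOn_of_deriv_nonpos (convex_Ici T) hv_cont
    · intro x hx
      rw [interior_Ici] at hx
      exact (hvw x hx).differentiableAt.differentiableWithinAt
    · intro x hx
      rw [interior_Ici] at hx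
      rw [(hvw x hx).deriv]
      exact hw0 x (Set.mem_Ici.mpr (le_of_lt hx))
  have hv_nonneg : ∀ s ∈ Set.Ioi T, 0 ≤ v s := by
    intro s hs
    by_contra hneg
    push_neg at hneg
    have hφ : AntitoneOn (fun t => u t - v s * t) (Set.Ici s) := by
      apply antitoneOn_of_deriv_nonpos (convex_Ici s)
      · exact (hu_cont.mono (Set.Ici_subset_Ici.mpr (le_of_lt hs))).sub
          (continuous_const.mul continuous_id).continuousOn
      · intro x hx
        rw [interior_Ici] at hx
        have hx' : x ∈ Set.Ioi T := Set.mem_Ioi.mpr (lt_trans (Set.mem_Ioi.mp hs) hx)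
        have hlin : HasDerivAt (fun t => v s * t) (v s) x := by
          simpa using (hasDerivAt_id x).const_mul (v s)
        exact ((huv x hx').sub hlin).differentiableAt.differentiableWithinAt
      · intro x hx
        rw [interior_Ici] at hx
        have hx' : x ∈ Set.Ioi T := Set.mem_Ioi.mpr (lt_trans (Set.mem_Ioi.mp hs) hx)
        have hlin : HasDerivAt (fun t => v s * t) (v s) x := by
          simpa using (hasDerivAt_id x).const_mul (v s)
        have hd := (huv x hx').sub hlin
        rw [show deriv (fun t => u t - v s * t) x = v x - v s from hd.deriv]
        have hvx : v x ≤ v s :=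
          hv_anti (Set.mem_Ici.mpr (le_of_lt hs)) (Set.mem_Ici.mpr (le_of_lt hx')) (le_of_lt hx)
        linarith
    have hle : ∀ t, s ≤ t → u t ≤ u s + v s * (t - s) := by
      intro t hts
      have h := hφ Set.self_mem_Ici (Set.mem_Ici.mpr hts) hts
      dsimp only at h
      linarith
    have hvs : 0 < -v s := by linarith
    have hus : 0 ≤ u s := hsign s (Set.mem_Ici.mpr (le_of_lt hs))
    set t1 := s + (u s + 1) / (-v s) with ht1
    have hst1 : s ≤ t1 := by
      have h0 : 0 ≤ (u s + 1) / (-v s) := div_nonneg (by linarith) hvs.le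
      rw [ht1]
      linarith
    have h3 : t1 - s = (u s + 1) / (-v s) := by rw [ht1]; ring
    have hkey : v s * ((u s + 1) / (-v s)) = -(u s + 1) := by
      have hne : v s ≠ 0 := ne_of_lt hneg
      field_simp
    have h1 := hle t1 hst1
    rw [h3, hkey] at h1
    have h2 : 0 ≤ u t1 := hsign t1 (Set.mem_Ici.mpr (le_trans (le_of_lt hs) hst1))
    linarith
  have hu_mono : MonotoneOn u (Set.Ici T) := by
    apply monotoneOn_of_deriv_nonneg (convex_Ici T) hu_cont
    · intro x hx
      rw [interior_Ici] at hx
      exact (huv x hx).differentiableAt.differentiableWithinAt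
    · intro x hx
      rw [interior_Ici] at hx
      rw [(huv x hx).deriv]
      exact hv_nonneg x hx
  intro t ht
  by_contra hne
  have hpos : 0 < u t := lt_of_le_of_ne (hsign t ht) (Ne.symm hne)
  have htT : T ≤ t := ht
  set t0 := t + 1 with ht0def
  have ht0 : T < t0 := by rw [ht0def]; linarith
  have ht0' : t0 ∈ Set.Ici T := Set.mem_Ici.mpr (le_of_lt ht0)
  have hc : 0 < u t0 :=
    lt_of_lt_of_le hpos (hu_mono ht ht0' (by rw [ht0def]; linarith))
  set c := u t0 with hcdef
  have hd : 0 < μ * c ^ 3 := by positivity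
  have hcc : ∀ x, t0 ≤ x → c ≤ u x := fun x hx =>
    hu_mono ht0' (Set.mem_Ici.mpr (le_trans (le_of_lt ht0) hx)) hx
  have hw' : ∀ x, t0 ≤ x → w x + μ * c ^ 3 ≤ 0 := by
    intro x hx
    have hxT : x ∈ Set.Ici T := Set.mem_Ici.mpr (le_trans (le_of_lt ht0) hx)
    have h1 := hg x hxT
    have h2 := hcc x hx
    have h3 : 0 < u x := lt_of_lt_of_le hc h2
    rw [heq x hxT]
    have h4 : μ * u x ^ 3 ≤ u x * g x := by nlinarith
    have h5 : μ * c ^ 3 ≤ μ * u x ^ 3 :=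
      mul_le_mul_of_nonneg_left (pow_le_pow_left₀ hc.le h2 3) hμ.le
    linarith
  have hψ : AntitoneOn (fun x => v x + μ * c ^ 3 * x) (Set.Ici t0) := by
    apply antitoneOn_of_deriv_nonpos (convex_Ici t0)
    · exact (hv_cont.mono (Set.Ici_subset_Ici.mpr (le_of_lt ht0))).add
        (continuous_const.mul continuous_id).continuousOn
    · intro x hx
      rw [interior_Ici] at hx
      have hx' : x ∈ Set.Ioi T := lt_trans ht0 hx
      have hlin : HasDerivAt (fun t => μ * c ^ 3 * t) (μ * c ^ 3) x := by
        simpa using (hasDerivAt_id x).const_mul (μ * c ^ 3)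
      exact ((hvw x hx').add hlin).differentiableAt.differentiableWithinAt
    · intro x hx
      rw [interior_Ici] at hx
      have hx' : x ∈ Set.Ioi T := lt_trans ht0 hx
      have hlin : HasDerivAt (fun t => μ * c ^ 3 * t) (μ * c ^ 3) x := by
        simpa using (hasDerivAt_id x).const_mul (μ * c ^ 3)
      have hdd := (hvw x hx').add hlin
      rw [show deriv (fun x => v x + μ * c ^ 3 * x) x = w x + μ * c ^ 3 from hdd.deriv]
      have := hw' x (le_of_lt hx)
      linarith
  have hvt0 : 0 ≤ v t0 := hv_nonneg t0 (Set.mem_Ioi.mpr ht0)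
  set x1 := t0 + (v t0 + 1) / (μ * c ^ 3) with hx1def
  have hx1 : t0 ≤ x1 := by
    have h0 : 0 ≤ (v t0 + 1) / (μ * c ^ 3) := div_nonneg (by linarith) hd.le
    rw [hx1def]
    linarith
  have h6 := hψ Set.self_mem_Ici (Set.mem_Ici.mpr hx1) hx1
  dsimp only at h6
  have h10 : μ * c ^ 3 * x1 = μ * c ^ 3 * t0 + (v t0 + 1) := by
    rw [hx1def]
    field_simp
  have h8 : 0 ≤ v x1 := hv_nonneg x1 (Set.mem_Ioi.mpr (lt_of_lt_of_le ht0 hx1))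
  linarith

/-- Backward-in-time Gronwall (energy) step: if the system vanishes at `S`, it
vanishes on `[0, S]`. -/
lemma energy_zero {N : ℕ} (u v w g : Fin N → ℝ → ℝ) (K S : ℝ) (hK : 0 ≤ K) (hS : 0 < S)
    (hucont : ∀ j, ContinuousOn (u j) (Set.Ici 0))
    (hvcont : ∀ j, ContinuousOn (v j) (Set.Ici 0))
    (hud : ∀ j, ∀ s ∈ Set.Ioi (0:ℝ), HasDerivAt (u j) (v j s) s)
    (hvd : ∀ j, ∀ s ∈ Set.Ioi (0:ℝ), HasDerivAt (v j) (w j s) s)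
    (heqg : ∀ j, ∀ s ∈ Set.Ici (0:ℝ), w j s = -(u j s * g j s))
    (hg0 : ∀ j, ∀ s ∈ Set.Ici (0:ℝ), 0 ≤ g j s)
    (hgK : ∀ j, ∀ s ∈ Set.Ici (0:ℝ), g j s ≤ K)
    (huS : ∀ j, u j S = 0) (hvS : ∀ j, v j S = 0) :
    ∀ t ∈ Set.Icc (0:ℝ) S, ∀ j, u j t = 0 := by
  classical
  set C := 1 + K with hCdef
  set E : ℝ → ℝ := fun s => ∑ i : Fin N, (u i s * u i s + v i s * v i s) with hEdef
  set D : ℝ → ℝ := fun s =>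
    ∑ i : Fin N, ((v i s * u i s + u i s * v i s) + (w i s * v i s + v i s * w i s)) with hDdef
  have hEd : ∀ s ∈ Set.Ioi (0:ℝ), HasDerivAt E (D s) s := by
    intro s hs
    exact HasDerivAt.fun_sum fun i _ =>
      ((hud i s hs).mul (hud i s hs)).add ((hvd i s hs).mul (hvd i s hs))
  have hEcont : ContinuousOn E (Set.Ici 0) := by
    apply continuousOn_finset_sum
    intro i _
    exact ((hucont i).mul (hucont i)).add ((hvcont i).mul (hvcont i))
  have hEnn : ∀ s, 0 ≤ E s := fun s =>
    Finset.sum_nonneg fun i _ => add_nonneg (mul_self_nonneg _) (mul_self_nonneg _)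
  have hDE : ∀ s ∈ Set.Ici (0:ℝ), -(C * E s) ≤ D s := by
    intro s hs
    have hterm : ∀ i : Fin N,
        -(C * (u i s * u i s + v i s * v i s)) ≤
          (v i s * u i s + u i s * v i s) + (w i s * v i s + v i s * w i s) := by
      intro i
      have h1 := heqg i s hs
      have hg0' := hg0 i s hs
      have hgK' := hgK i s hs
      rw [h1, hCdef]
      nlinarith [sq_nonneg (u i s + v i s), sq_nonneg (u i s - v i s),
        mul_nonneg hg0' (sq_nonneg (u i s - v i s)),
        mul_nonneg hg0' (sq_nonneg (u i s + v i s)),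
        mul_nonneg (sub_nonneg.mpr hgK')
          (add_nonneg (mul_self_nonneg (u i s)) (mul_self_nonneg (v i s)))]
    calc -(C * E s) = ∑ i : Fin N, -(C * (u i s * u i s + v i s * v i s)) := by
          rw [hEdef]
          rw [Finset.mul_sum, ← Finset.sum_neg_distrib]
      _ ≤ D s := Finset.sum_le_sum fun i _ => hterm i
  have hHmono : MonotoneOn (fun s => E s * Real.exp (C * s)) (Set.Icc 0 S) := by
    apply monotoneOn_of_deriv_nonneg (convex_Icc 0 S)
    · exact (hEcont.mono Set.Icc_subset_Ici_self).mul
        ((Real.continuous_exp.comp (continuous_const.mul continuous_id)).continuousOn)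
    · intro x hx
      rw [interior_Icc] at hx
      have hexp : HasDerivAt (fun y => Real.exp (C * y)) (Real.exp (C * x) * C) x := by
        simpa using ((hasDerivAt_id x).const_mul C).exp
      exact ((hEd x hx.1).mul hexp).differentiableAt.differentiableWithinAt
    · intro x hx
      rw [interior_Icc] at hx
      have hexp : HasDerivAt (fun y => Real.exp (C * y)) (Real.exp (C * x) * C) x := by
        simpa using ((hasDerivAt_id x).const_mul C).exp
      have hdH := (hEd x hx.1).mul hexp
      rw [show deriv (fun s => E s * Real.exp (C * s)) x =
          D x * Real.exp (C * x) + E x * (Real.exp (C * x) * C) from hdH.deriv]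
      have h1 := hDE x (Set.mem_Ici.mpr (le_of_lt hx.1))
      have h2 : (0:ℝ) < Real.exp (C * x) := Real.exp_pos _
      nlinarith [mul_le_mul_of_nonneg_right h1 h2.le]
  intro t ht j
  have hSmem : S ∈ Set.Icc (0:ℝ) S := ⟨hS.le, le_rfl⟩
  have hHle := hHmono ht hSmem ht.2
  dsimp only at hHle
  have hES : E S = 0 := by
    rw [hEdef]
    exact Finset.sum_eq_zero fun i _ => by rw [huS i, hvS i]; ring
  rw [hES, zero_mul] at hHle
  have hHt : 0 ≤ E t * Real.exp (C * t) := mul_nonneg (hEnn t) (Real.exp_pos _).le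
  have hEt : E t = 0 := by
    have h2 : (0:ℝ) < Real.exp (C * t) := Real.exp_pos _
    nlinarith
  have hterm : u j t * u j t + v j t * v j t = 0 := by
    have hnn : ∀ i ∈ (Finset.univ : Finset (Fin N)),
        0 ≤ u i t * u i t + v i t * v i t := fun i _ =>
      add_nonneg (mul_self_nonneg _) (mul_self_nonneg _)
    have hsum : ∑ i : Fin N, (u i t * u i t + v i t * v i t) = 0 := hEt
    exact (Finset.sum_eq_zero_iff_of_nonneg hnn).mp hsum j (Finset.mem_univ j)
  have h1 : u j t * u j t = 0 :=
    le_antisymm (by nlinarith [mul_self_nonneg (v j t)]) (mul_self_nonneg _)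
  exact mul_self_eq_zero.mp h1

theorem liouville_1d_halfline_nonneg (N : ℕ) (hN : 2 ≤ N) (μ : Fin N → ℝ) (hμ : ∀ j, 0 < μ j)
    (P : Fin N → ℕ) (B : Fin N → Fin N → ℝ)
    (hBsymm : ∀ i j, i ≠ j → B i j = B j i)
    (hBpos : ∀ i j, i ≠ j → 0 ≤ B i j) :
        ∀ u : Fin N → ℝ → ℝ,
          (∀ j, ContDiffOn ℝ 2 (u j) (Set.Ici 0)) →
          (∀ j, u j 0 = 0) →
          (∀ j, ∀ t ∈ Set.Ici (0 : ℝ), |u j t| ≤ 1) →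
          (∀ j, (∀ t ∈ Set.Ici (0 : ℝ), u j t = 0) ∨
            ChangesSignAtMost1D (u j) (Set.Ici 0) (P j)) →
          (∀ j, ∀ t ∈ Set.Ici (0 : ℝ),
            -derivWithin (derivWithin (u j) (Set.Ici 0)) (Set.Ici 0) t =
              μ j * u j t ^ 3 + ∑ i ∈ Finset.univ.erase j, B i j * u i t ^ 2 * u j t) →
          ∀ j, ∀ t ∈ Set.Ici (0 : ℝ), u j t = 0 := by
  intro u hu hu0 hbd hsgn heq
  classical
  set v : Fin N → ℝ → ℝ := fun j => derivWithin (u j) (Set.Ici 0) with hvdef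
  set w : Fin N → ℝ → ℝ := fun j => derivWithin (v j) (Set.Ici 0) with hwdef
  set g : Fin N → ℝ → ℝ := fun j s =>
    μ j * u j s ^ 2 + ∑ i ∈ Finset.univ.erase j, B i j * u i s ^ 2 with hgdef
  have hvcd : ∀ j, ContDiffOn ℝ 1 (v j) (Set.Ici 0) := fun j =>
    (hu j).derivWithin (uniqueDiffOn_Ici 0) (by norm_num)
  have hucont : ∀ j, ContinuousOn (u j) (Set.Ici 0) := fun j => (hu j).continuousOn
  have hvcont : ∀ j, ContinuousOn (v j) (Set.Ici 0) := fun j => (hvcd j).continuousOn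
  have hud : ∀ j, ∀ s ∈ Set.Ioi (0:ℝ), HasDerivAt (u j) (v j s) s := by
    intro j s hs
    have hmem : Set.Ici (0:ℝ) ∈ nhds s := Ici_mem_nhds hs
    have h1 : DifferentiableAt ℝ (u j) s :=
      ((hu j).contDiffAt hmem).differentiableAt (by norm_num)
    have h2 : v j s = deriv (u j) s := derivWithin_of_mem_nhds hmem
    rw [h2]
    exact h1.hasDerivAt
  have hvd : ∀ j, ∀ s ∈ Set.Ioi (0:ℝ), HasDerivAt (v j) (w j s) s := by
    intro j s hs
    have hmem : Set.Ici (0:ℝ) ∈ nhds s := Ici_mem_nhds hs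
    have h1 : DifferentiableAt ℝ (v j) s :=
      ((hvcd j).contDiffAt hmem).differentiableAt (by norm_num)
    have h2 : w j s = deriv (v j) s := derivWithin_of_mem_nhds hmem
    rw [h2]
    exact h1.hasDerivAt
  have heqg : ∀ j, ∀ s ∈ Set.Ici (0:ℝ), w j s = -(u j s * g j s) := by
    intro j s hs
    have h1 := heq j s hs
    have h2 : u j s * g j s =
        μ j * u j s ^ 3 + ∑ i ∈ Finset.univ.erase j, B i j * u i s ^ 2 * u j s := by
      rw [hgdef]
      dsimp only
      rw [mul_add, Finset.mul_sum]
      congr 1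
      · ring
      · exact Finset.sum_congr rfl fun i _ => by ring
    rw [← h2] at h1
    have h3 : -(w j s) = u j s * g j s := h1
    linarith
  have hgl : ∀ j, ∀ s ∈ Set.Ici (0:ℝ), μ j * u j s ^ 2 ≤ g j s := by
    intro j s hs
    have hsum : 0 ≤ ∑ i ∈ Finset.univ.erase j, B i j * u i s ^ 2 :=
      Finset.sum_nonneg fun i hi =>
        mul_nonneg (hBpos i j (Finset.ne_of_mem_erase hi)) (sq_nonneg _)
    rw [hgdef]
    dsimp only
    linarith
  have hg0 : ∀ j, ∀ s ∈ Set.Ici (0:ℝ), 0 ≤ g j s := by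
    intro j s hs
    exact le_trans (mul_nonneg (hμ j).le (sq_nonneg _)) (hgl j s hs)
  set K := ∑ j : Fin N, (μ j + ∑ i ∈ Finset.univ.erase j, B i j) with hKdef
  have hKj : ∀ j : Fin N, (0:ℝ) ≤ μ j + ∑ i ∈ Finset.univ.erase j, B i j := fun j =>
    add_nonneg (hμ j).le
      (Finset.sum_nonneg fun i hi => hBpos i j (Finset.ne_of_mem_erase hi))
  have hKnn : 0 ≤ K := Finset.sum_nonneg fun j _ => hKj j
  have hgK : ∀ j, ∀ s ∈ Set.Ici (0:ℝ), g j s ≤ K := by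
    intro j s hs
    have hsq : ∀ i : Fin N, u i s ^ 2 ≤ 1 := by
      intro i
      have h := hbd i s hs
      nlinarith [sq_abs (u i s), abs_nonneg (u i s)]
    have h1 : g j s ≤ μ j + ∑ i ∈ Finset.univ.erase j, B i j := by
      rw [hgdef]
      dsimp only
      apply add_le_add
      · nlinarith [hsq j, (hμ j).le]
      · refine Finset.sum_le_sum fun i hi => ?_
        have hb := hBpos i j (Finset.ne_of_mem_erase hi)
        nlinarith [hsq i]
    exact le_trans h1 (Finset.single_le_sum (fun i _ => hKj i) (Finset.mem_univ j))
  -- Each component vanishes eventually.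
  have hev : ∀ j, ∃ T, 0 ≤ T ∧ ∀ s, T ≤ s → u j s = 0 := by
    intro j
    rcases hsgn j with hz | hcs
    · exact ⟨0, le_rfl, fun s hs => hz s (Set.mem_Ici.mpr hs)⟩
    obtain ⟨T, hT0, hsc⟩ := eventual_sign (u j) (P j) hcs
    have hIci : Set.Ici T ⊆ Set.Ici (0:ℝ) := Set.Ici_subset_Ici.mpr hT0
    have hIoi : Set.Ioi T ⊆ Set.Ioi (0:ℝ) := Set.Ioi_subset_Ioi hT0
    rcases hsc with hpos | hneg
    · refine ⟨T, hT0, fun s hs => ?_⟩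
      exact vanish_of_nonneg (hμ j) ((hucont j).mono hIci) ((hvcont j).mono hIci)
        (fun x hx => hud j x (hIoi hx)) (fun x hx => hvd j x (hIoi hx))
        (fun x hx => hgl j x (hIci hx)) (fun x hx => heqg j x (hIci hx))
        (fun x hx => hpos x hx) s (Set.mem_Ici.mpr hs)
    · refine ⟨T, hT0, fun s hs => ?_⟩
      have hz := vanish_of_nonneg (u := fun x => -u j x) (v := fun x => -v j x)
        (w := fun x => -w j x) (g := g j) (hμ j)
        ((hucont j).mono hIci).neg ((hvcont j).mono hIci).neg
        (fun x hx => (hud j x (hIoi hx)).neg) (fun x hx => (hvd j x (hIoi hx)).neg)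
        (fun x hx => by
          show μ j * (-u j x) ^ 2 ≤ g j x
          rw [neg_sq]; exact hgl j x (hIci hx))
        (fun x hx => by
          show -w j x = -(-u j x * g j x)
          rw [heqg j x (hIci hx)]; ring)
        (fun x hx => by
          show (0:ℝ) ≤ -u j x
          simpa using hneg x hx)
        s (Set.mem_Ici.mpr hs)
      have : -u j s = 0 := hz
      linarith
  choose T hT0 hTz using hev
  intro j t ht
  have ht' : (0:ℝ) ≤ t := ht
  set S := (∑ i : Fin N, T i) + t + 1 with hSdef
  have hsumT : 0 ≤ ∑ i : Fin N, T i := Finset.sum_nonneg fun i _ => hT0 i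
  have hTS : ∀ i, T i < S := by
    intro i
    have h1 : T i ≤ ∑ i : Fin N, T i :=
      Finset.single_le_sum (fun i _ => hT0 i) (Finset.mem_univ i)
    rw [hSdef]
    linarith
  have hS0 : (0:ℝ) < S := by rw [hSdef]; linarith
  have htS : t < S := by rw [hSdef]; linarith
  have huS : ∀ i, u i S = 0 := fun i => hTz i S (hTS i).le
  have hvS : ∀ i, v i S = 0 := by
    intro i
    have h1 : v i S = deriv (u i) S := derivWithin_of_mem_nhds (Ici_mem_nhds hS0)
    have h2 : u i =ᶠ[nhds S] fun _ => 0 :=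
      Filter.eventuallyEq_of_mem (Ici_mem_nhds (hTS i)) fun x hx => hTz i x hx
    rw [h1, h2.deriv_eq]
    simp
  exact energy_zero u v w g K S hKnn hS0 hucont hvcont hud hvd heqg hg0 hgK huS hvS
    t ⟨ht', htS.le⟩ j
end

section
/- Let N ≥ 2, let μ₁,…,μ_N > 0 be constants and let P₁,…,P_N ∈ ℕ. Then there exists a constant ε₃ = ε₃(μ₁,…,μ_N; P₁,…,P_N) > 0 with the following property: whenever real constants β_{ij} = β_{ji} (for i ≠ j) satisfy |β_{ij}| < ε₃, and u₁,…,u_N : [0,∞) → ℝ are functions of class C² such that for every j one has u_j(0) = 0, |u_j(t)| ≤ 1 for all t ∈ [0,∞), u_j is either identically zero or changes sign at most P_j times, and −u_j'' = μ_j u_j³ + Σ_{i≠j} β_{ij} u_i² u_j holds pointwise on [0,∞), then u_j ≡ 0 for every j = 1,…,N. -/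
open scoped BigOperators

lemma exists_eventual_sign (u : ℝ → ℝ) (P : ℕ) (h : ChangesSignAtMost1D u (Set.Ici 0) P) :
    ∃ T : ℝ, 0 < T ∧ ((∀ t, T ≤ t → 0 ≤ u t) ∨ (∀ t, T ≤ t → u t ≤ 0)) := by
  by_contra hc
  push_neg at hc
  have key : ∀ T : ℝ, 0 < T → ∃ a b : ℝ, T ≤ a ∧ a < b ∧ u a * u b < 0 := by
    intro T hT
    obtain ⟨h1, h2⟩ := hc T hT
    obtain ⟨x, hx, hxneg⟩ := h1
    obtain ⟨y, hy, hypos⟩ := h2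
    rcases lt_trichotomy x y with hlt | heq | hgt
    · exact ⟨x, y, hx, hlt, by nlinarith⟩
    · exfalso; rw [heq] at hxneg; linarith
    · exact ⟨y, x, hy, hgt, by nlinarith⟩
  have claim : ∀ k : ℕ, ∃ t : Fin (k+1) → ℝ, (∀ i, 0 < t i) ∧ StrictMono t ∧
      (∀ i : Fin k, u (t i.castSucc) * u (t i.succ) < 0) ∧ u (t (Fin.last k)) ≠ 0 := by
    intro k
    induction k with
    | zero =>
      obtain ⟨a, b, ha, hab, hprod⟩ := key 1 one_pos
      refine ⟨fun _ => b, fun _ => by linarith,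
        @Subsingleton.strictMono _ _ _ _ (by exact Fin.subsingleton_one) _, fun i => i.elim0, ?_⟩
      intro h0
      simp only [Fin.last] at h0
      rw [h0] at hprod; linarith
    | succ k ih =>
      obtain ⟨t, hpos, hmono, hprod, hne⟩ := ih
      set L := t (Fin.last k) with hL
      obtain ⟨a, b, ha, hab, hab2⟩ := key (L + 1) (by linarith [hpos (Fin.last k)])
      have hr : ∃ r, L < r ∧ u r * u L < 0 := by
        by_cases hcase : u a * u L < 0
        · exact ⟨a, by linarith, hcase⟩
        · push_neg at hcase
          have ha0 : u a ≠ 0 := by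
            intro h0; rw [h0] at hab2; simp at hab2
          have haL : 0 < u a * u L := lt_of_le_of_ne hcase (by
            intro h0
            rcases mul_eq_zero.1 h0.symm with h | h
            · exact ha0 h
            · exact hne h)
          refine ⟨b, by linarith, ?_⟩
          nlinarith [sq_nonneg (u a), mul_pos haL (neg_pos.2 hab2)]
      obtain ⟨r, hLr, hrL⟩ := hr
      refine ⟨Fin.snoc t r, ?_, ?_, ?_, ?_⟩
      · intro i
        refine Fin.lastCases ?_ ?_ i
        · simpa using lt_trans (hpos (Fin.last k)) hLr
        · intro j; simpa using hpos j
      · rw [Fin.strictMono_iff_lt_succ]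
        intro i
        refine Fin.lastCases ?_ ?_ i
        · rw [Fin.succ_last]
          simpa using hLr
        · intro j
          rw [Fin.succ_castSucc]
          simp only [Fin.snoc_castSucc]
          exact hmono (Fin.castSucc_lt_succ : j.castSucc < j.succ)
      · intro i
        refine Fin.lastCases ?_ ?_ i
        · rw [Fin.succ_last]
          simpa [mul_comm] using hrL
        · intro j
          rw [Fin.succ_castSucc]
          simp only [Fin.snoc_castSucc]
          exact hprod j
      · simpa using fun h0 => by rw [h0] at hrL; simp at hrL
  obtain ⟨t, hpos, hmono, hprod, _⟩ := claim (P + 1)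
  exact h ⟨t, fun i => le_of_lt (hpos i), hmono, hprod⟩

lemma monotoneOn_of_concave_nonneg {T : ℝ} {s : ℝ → ℝ} (hc : ConcaveOn ℝ (Set.Ici T) s)
    (h0 : ∀ t, T ≤ t → 0 ≤ s t) : MonotoneOn s (Set.Ici T) := by
  intro a ha b hb hab
  by_contra hlt
  push_neg at hlt
  have haT : T ≤ a := ha
  have hD : 0 < s a - s b := by linarith
  have hsa : 0 ≤ s a := h0 a ha
  have hsb : 0 ≤ s b := h0 b hb
  have hab' : a < b := lt_of_le_of_ne hab (by rintro rfl; linarith)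
  set D := s a - s b with hDdef
  set t := a + (b - a) * (s a + 1) / D with htdef
  have hbt : b < t := by
    have h1 : (b - a) < (b - a) * (s a + 1) / D := by
      rw [lt_div_iff₀ hD]
      nlinarith
    rw [htdef]; linarith
  have hat : a < t := lt_trans hab' hbt
  have hta : 0 < t - a := by linarith
  set w1 := (t - b) / (t - a) with hw1
  set w2 := (b - a) / (t - a) with hw2
  have hw1pos : 0 ≤ w1 := by rw [hw1]; exact div_nonneg (by linarith) (by linarith)
  have hw2pos : 0 ≤ w2 := by rw [hw2]; exact div_nonneg (by linarith) (by linarith)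
  have hsum : w1 + w2 = 1 := by rw [hw1, hw2]; field_simp; ring
  have hcomb : w1 • a + w2 • t = b := by
    simp only [smul_eq_mul, hw1, hw2]
    field_simp
    ring
  have hineq := hc.2 (Set.mem_Ici.2 haT) (Set.mem_Ici.2 (le_trans haT (le_of_lt hat)))
    hw1pos hw2pos hsum
  rw [hcomb] at hineq
  simp only [smul_eq_mul] at hineq
  have hst : 0 ≤ s t := h0 t (le_trans haT (le_of_lt hat))
  have hkey : w1 * s a ≤ s b := by nlinarith
  rw [hw1, div_mul_eq_mul_div, div_le_iff₀ hta] at hkey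
  have h1 : (t - b) * D = (b - a) * (s a + 1 - D) := by
    rw [htdef]; field_simp; ring
  have h2 : (t - a) * D = (b - a) * (s a + 1) := by
    rw [htdef]; field_simp; ring
  nlinarith [mul_le_mul_of_nonneg_right hkey (le_of_lt hD)]

lemma double_swap {N : ℕ} (B : Fin N → Fin N → ℝ) (hB : ∀ i j, i ≠ j → B i j = B j i)
    (f g : Fin N → ℝ) :
    ∑ j, ∑ i ∈ Finset.univ.erase j, B i j * f i * g j
      = ∑ j, ∑ i ∈ Finset.univ.erase j, B i j * g i * f j := by
  rw [Finset.sum_comm' (s' := fun i => Finset.univ.erase i) (t' := Finset.univ)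
    (fun j i => by
      simp only [Finset.mem_univ, Finset.mem_erase, true_and, and_true]
      exact ne_comm)]
  refine Finset.sum_congr rfl fun i _ => Finset.sum_congr rfl fun j hj => ?_
  rw [hB j i (Finset.ne_of_mem_erase hj)]
  ring

lemma abs_double_sum_le {N : ℕ} (f : Fin N → Fin N → ℝ) {C : ℝ}
    (h : ∀ j i, i ≠ j → |f i j| ≤ C) (hC : 0 ≤ C) :
    |∑ j, ∑ i ∈ Finset.univ.erase j, f i j| ≤ (N : ℝ)^2 * C := by
  calc |∑ j, ∑ i ∈ Finset.univ.erase j, f i j|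
      ≤ ∑ j, |∑ i ∈ Finset.univ.erase j, f i j| := Finset.abs_sum_le_sum_abs _ _
    _ ≤ ∑ _j : Fin N, (N : ℝ) * C := by
        refine Finset.sum_le_sum fun j _ => ?_
        calc |∑ i ∈ Finset.univ.erase j, f i j|
            ≤ ∑ i ∈ Finset.univ.erase j, |f i j| := Finset.abs_sum_le_sum_abs _ _
          _ ≤ ∑ _i ∈ Finset.univ.erase j, C :=
              Finset.sum_le_sum fun i hi => h j i (Finset.ne_of_mem_erase hi)
          _ = ((Finset.univ.erase j).card : ℝ) * C := by
              rw [Finset.sum_const, nsmul_eq_mul]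
          _ ≤ (N : ℝ) * C := by
              have hcard : (Finset.univ.erase j).card ≤ N := by
                calc (Finset.univ.erase j).card ≤ (Finset.univ : Finset (Fin N)).card :=
                    Finset.card_le_card (Finset.erase_subset _ _)
                  _ = N := by simp
              exact mul_le_mul_of_nonneg_right (by exact_mod_cast hcard) hC
    _ = (N : ℝ)^2 * C := by
        rw [Finset.sum_const, nsmul_eq_mul]
        simp
        ring

set_option maxHeartbeats 2000000 in
theorem liouville_1d_halfline_small (N : ℕ) (hN : 2 ≤ N) (μ : Fin N → ℝ) (hμ : ∀ j, 0 < μ j)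
    (P : Fin N → ℕ) :
    ∃ ε₃ : ℝ, 0 < ε₃ ∧
      ∀ B : Fin N → Fin N → ℝ,
        (∀ i j, i ≠ j → B i j = B j i) →
        (∀ i j, i ≠ j → |B i j| < ε₃) →
        ∀ u : Fin N → ℝ → ℝ,
          (∀ j, ContDiffOn ℝ 2 (u j) (Set.Ici 0)) →
          (∀ j, u j 0 = 0) →
          (∀ j, ∀ t ∈ Set.Ici (0 : ℝ), |u j t| ≤ 1) →
          (∀ j, (∀ t ∈ Set.Ici (0 : ℝ), u j t = 0) ∨
            ChangesSignAtMost1D (u j) (Set.Ici 0) (P j)) →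
          (∀ j, ∀ t ∈ Set.Ici (0 : ℝ),
            -derivWithin (derivWithin (u j) (Set.Ici 0)) (Set.Ici 0) t =
              μ j * u j t ^ 3 + ∑ i ∈ Finset.univ.erase j, B i j * u i t ^ 2 * u j t) →
          ∀ j, ∀ t ∈ Set.Ici (0 : ℝ), u j t = 0 := by
  have hNpos : 0 < N := by omega
  haveI : NeZero N := ⟨by omega⟩
  have hne : (Finset.univ : Finset (Fin N)).Nonempty := ⟨⟨0, hNpos⟩, Finset.mem_univ _⟩
  set m : ℝ := Finset.univ.inf' hne μ with hmdef
  have hm : 0 < m := by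
    obtain ⟨j₀, _, hj₀⟩ := Finset.exists_mem_eq_inf' hne μ
    rw [hmdef, hj₀]; exact hμ j₀
  have hmle : ∀ j, m ≤ μ j := fun j => Finset.inf'_le μ (Finset.mem_univ j)
  have hNR : (0:ℝ) < (N:ℝ) := by exact_mod_cast hNpos
  refine ⟨m / (2 * (N:ℝ)^2), by positivity, ?_⟩
  set ε : ℝ := m / (2 * (N:ℝ)^2) with hεdef
  have hεN2 : ε * (N:ℝ)^2 = m / 2 := by rw [hεdef]; field_simp
  have hεpos : 0 < ε := by rw [hεdef]; positivity
  intro B hBsymm hBsmall u hu hu0 hub hsign hode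
  -- regularity
  have hdAt : ∀ j (x : ℝ), 0 < x → DifferentiableAt ℝ (u j) x := by
    intro j x hx
    exact (((hu j).mono Set.Ioi_subset_Ici_self).differentiableOn (by norm_num)).differentiableAt
      (isOpen_Ioi.mem_nhds hx)
  have hdAt' : ∀ j (x : ℝ), 0 < x → DifferentiableAt ℝ (deriv (u j)) x := by
    intro j x hx
    exact ((((hu j).mono Set.Ioi_subset_Ici_self).deriv_of_isOpen (m := 1) isOpen_Ioi
      (by norm_num)).differentiableOn one_ne_zero).differentiableAt (isOpen_Ioi.mem_nhds hx)
  have hu' : ∀ j (x : ℝ), 0 < x → HasDerivAt (u j) (deriv (u j) x) x :=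
    fun j x hx => (hdAt j x hx).hasDerivAt
  have hu'' : ∀ j (x : ℝ), 0 < x → HasDerivAt (deriv (u j)) (deriv (deriv (u j)) x) x :=
    fun j x hx => (hdAt' j x hx).hasDerivAt
  have hodeD : ∀ j (x : ℝ), 0 < x → deriv (deriv (u j)) x =
      -(μ j * u j x ^ 3 + ∑ i ∈ Finset.univ.erase j, B i j * u i x ^ 2 * u j x) := by
    intro j x hx
    have hmem : Set.Ici (0:ℝ) ∈ nhds x :=
      Filter.mem_of_superset (isOpen_Ioi.mem_nhds hx) Set.Ioi_subset_Ici_self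
    have he : derivWithin (u j) (Set.Ici 0) =ᶠ[nhds x] deriv (u j) := by
      filter_upwards [isOpen_Ioi.mem_nhds hx] with y hy
      exact derivWithin_of_mem_nhds
        (Filter.mem_of_superset (isOpen_Ioi.mem_nhds hy) Set.Ioi_subset_Ici_self)
    have h0 := hode j x (le_of_lt hx)
    rw [derivWithin_of_mem_nhds hmem, he.deriv_eq] at h0
    linarith
  -- eventual signs
  have hsign' : ∀ j, ∃ T σ : ℝ, 0 < T ∧ (σ = 1 ∨ σ = -1) ∧ ∀ t, T ≤ t → 0 ≤ σ * u j t := by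
    intro j
    rcases hsign j with hz | hcs
    · exact ⟨1, 1, one_pos, Or.inl rfl, fun t ht => by
        rw [hz t (by simp only [Set.mem_Ici]; linarith)]; simp⟩
    · obtain ⟨T, hT, hc⟩ := exists_eventual_sign (u j) (P j) hcs
      rcases hc with h | h
      · exact ⟨T, 1, hT, Or.inl rfl, fun t ht => by simpa using h t ht⟩
      · exact ⟨T, -1, hT, Or.inr rfl, fun t ht => by have := h t ht; linarith⟩
  choose T₀ σ hT₀ hσ hσu using hsign'
  have hσ2 : ∀ j, σ j ^ 2 = 1 := by intro j; rcases hσ j with h | h <;> rw [h] <;> norm_num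
  have hσne : ∀ j, σ j ≠ 0 := by intro j; rcases hσ j with h | h <;> rw [h] <;> norm_num
  set T : ℝ := Finset.univ.sup' hne T₀ with hTdef
  have hTj : ∀ j, T₀ j ≤ T := fun j => Finset.le_sup' T₀ (Finset.mem_univ j)
  have hTpos : 0 < T := lt_of_lt_of_le (hT₀ ⟨0, hNpos⟩) (hTj ⟨0, hNpos⟩)
  have hv : ∀ j t, T ≤ t → 0 ≤ σ j * u j t := fun j t ht => hσu j t (le_trans (hTj j) ht)
  -- the function s
  set s : ℝ → ℝ := fun t => ∑ j, σ j * u j t with hsdef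
  have hs0 : ∀ t, T ≤ t → 0 ≤ s t := fun t ht =>
    Finset.sum_nonneg fun j _ => hv j t ht
  have hsN : ∀ t, 0 ≤ t → s t ≤ (N:ℝ) := by
    intro t ht
    calc s t ≤ ∑ _j : Fin N, (1:ℝ) := by
          refine Finset.sum_le_sum fun j _ => ?_
          have h1 := hub j t ht
          rcases hσ j with h | h <;> rw [h] <;> cases abs_le.1 h1 <;> linarith
      _ = (N:ℝ) := by simp
  have hsD : ∀ x : ℝ, 0 < x → HasDerivAt s (∑ j, σ j * deriv (u j) x) x := by
    intro x hx
    exact HasDerivAt.fun_sum fun j _ => (hu' j x hx).const_mul (σ j)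
  have hsD' : ∀ x : ℝ, 0 < x →
      HasDerivAt (fun y => ∑ j, σ j * deriv (u j) y) (∑ j, σ j * deriv (deriv (u j)) x) x := by
    intro x hx
    exact HasDerivAt.fun_sum fun j _ => (hu'' j x hx).const_mul (σ j)
  have hscont : ContinuousOn s (Set.Ici T) := by
    refine continuousOn_finset_sum _ fun j _ => ContinuousOn.mul continuousOn_const ?_
    exact ((hu j).continuousOn).mono (Set.Ici_subset_Ici.2 (le_of_lt hTpos))
  -- key second-derivative estimate
  have hest : ∀ x : ℝ, T ≤ x →
      (∑ j, σ j * deriv (deriv (u j)) x) ≤ -(m / (2 * (N:ℝ)^3)) * (s x)^3 := by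
    intro x hx
    have hx0 : 0 < x := lt_of_lt_of_le hTpos hx
    set v : Fin N → ℝ := fun j => σ j * u j x with hvdef
    have hvnn : ∀ j, 0 ≤ v j := fun j => hv j x hx
    set M : ℝ := Finset.univ.sup' hne v with hMdef
    have hvM : ∀ j, v j ≤ M := fun j => Finset.le_sup' v (Finset.mem_univ j)
    have hM0 : 0 ≤ M := le_trans (hvnn ⟨0, hNpos⟩) (hvM ⟨0, hNpos⟩)
    have heq : (∑ j, σ j * deriv (deriv (u j)) x)
        = -((∑ j, μ j * v j ^ 3) + ∑ j, ∑ i ∈ Finset.univ.erase j, B i j * v i ^ 2 * v j) := by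
      have h1 : ∀ j : Fin N, σ j * deriv (deriv (u j)) x
          = -(μ j * v j ^ 3 + ∑ i ∈ Finset.univ.erase j, B i j * v i ^ 2 * v j) := by
        intro j
        rw [hodeD j x hx0]
        have h2 : σ j * (∑ i ∈ Finset.univ.erase j, B i j * u i x ^ 2 * u j x)
            = ∑ i ∈ Finset.univ.erase j, B i j * v i ^ 2 * v j := by
          rw [Finset.mul_sum]
          refine Finset.sum_congr rfl fun i _ => ?_
          simp only [hvdef]
          linear_combination (-(B i j * u i x ^ 2 * u j x * σ j)) * (hσ2 i)
        have h3 : σ j * (μ j * u j x ^ 3) = μ j * v j ^ 3 := by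
          simp only [hvdef]
          linear_combination (-(μ j * u j x ^ 3 * σ j)) * (hσ2 j)
        calc σ j * -(μ j * u j x ^ 3 + ∑ i ∈ Finset.univ.erase j, B i j * u i x ^ 2 * u j x)
            = -(σ j * (μ j * u j x ^ 3)
                + σ j * ∑ i ∈ Finset.univ.erase j, B i j * u i x ^ 2 * u j x) := by ring
          _ = -(μ j * v j ^ 3 + ∑ i ∈ Finset.univ.erase j, B i j * v i ^ 2 * v j) := by
              rw [h3, h2]
      calc (∑ j, σ j * deriv (deriv (u j)) x)
          = ∑ j, -(μ j * v j ^ 3 + ∑ i ∈ Finset.univ.erase j, B i j * v i ^ 2 * v j) :=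
            Finset.sum_congr rfl fun j _ => h1 j
        _ = -((∑ j, μ j * v j ^ 3) + ∑ j, ∑ i ∈ Finset.univ.erase j, B i j * v i ^ 2 * v j) := by
            rw [Finset.sum_neg_distrib, Finset.sum_add_distrib]
    have part1 : m * M ^ 3 ≤ ∑ j, μ j * v j ^ 3 := by
      obtain ⟨j₀, _, hj₀⟩ := Finset.exists_mem_eq_sup' hne v
      have hstep : m * M ^ 3 ≤ μ j₀ * v j₀ ^ 3 := by
        rw [hMdef, hj₀]
        exact mul_le_mul_of_nonneg_right (hmle j₀) (pow_nonneg (hvnn j₀) 3)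
      exact le_trans hstep (Finset.single_le_sum
        (fun i _ => mul_nonneg (le_of_lt (hμ i)) (pow_nonneg (hvnn i) 3)) (Finset.mem_univ j₀))
    have part2 : |∑ j, ∑ i ∈ Finset.univ.erase j, B i j * v i ^ 2 * v j|
        ≤ (N:ℝ)^2 * (ε * M ^ 3) := by
      refine abs_double_sum_le _ (fun j i hij => ?_) (by positivity)
      have h1 : |B i j * v i ^ 2 * v j| = |B i j| * (v i ^ 2 * v j) := by
        rw [abs_mul, abs_mul, abs_of_nonneg (pow_nonneg (hvnn i) 2), abs_of_nonneg (hvnn j)]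
        ring
      rw [h1]
      have hb := le_of_lt (hBsmall i j hij)
      have h2a : v i ^ 2 ≤ M ^ 2 := by nlinarith [hvM i, hvnn i]
      have h2 : v i ^ 2 * v j ≤ M ^ 3 := by
        nlinarith [mul_le_mul h2a (hvM j) (hvnn j) (sq_nonneg M)]
      exact mul_le_mul hb h2 (mul_nonneg (pow_nonneg (hvnn i) 2) (hvnn j)) (le_of_lt hεpos)
    have hsx : s x ≤ (N:ℝ) * M := by
      have : s x = ∑ j, v j := by simp only [hsdef, hvdef]
      rw [this]
      calc ∑ j, v j ≤ ∑ _j : Fin N, M := Finset.sum_le_sum fun j _ => hvM j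
        _ = (N:ℝ) * M := by rw [Finset.sum_const]; simp [nsmul_eq_mul]
    have hsx0 : 0 ≤ s x := hs0 x hx
    have hcube : (s x) ^ 3 ≤ ((N:ℝ) * M) ^ 3 := pow_le_pow_left₀ hsx0 hsx 3
    have hkey : (m / (2 * (N:ℝ)^3)) * (s x) ^ 3 ≤ (m / 2) * M ^ 3 := by
      calc (m / (2 * (N:ℝ)^3)) * (s x) ^ 3 ≤ (m / (2 * (N:ℝ)^3)) * ((N:ℝ) * M) ^ 3 :=
            mul_le_mul_of_nonneg_left hcube (by positivity)
        _ = (m / 2) * M ^ 3 := by field_simp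
    have hN3 : (N:ℝ)^2 * (ε * M ^ 3) = (m / 2) * M ^ 3 := by linear_combination M ^ 3 * hεN2
    rw [heq]
    have habs := (abs_le.1 part2).1
    rw [hN3] at habs
    nlinarith [part1, habs, hkey]
  -- concavity of s on [T, ∞)
  have hconc : ConcaveOn ℝ (Set.Ici T) s := by
    refine concaveOn_of_hasDerivWithinAt2_nonpos (convex_Ici T) hscont
      (f' := fun x => ∑ j, σ j * deriv (u j) x)
      (f'' := fun x => ∑ j, σ j * deriv (deriv (u j)) x) ?_ ?_ ?_
    · intro x hx; rw [interior_Ici] at hx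
      exact (hsD x (lt_trans hTpos hx)).hasDerivWithinAt
    · intro x hx; rw [interior_Ici] at hx
      exact (hsD' x (lt_trans hTpos hx)).hasDerivWithinAt
    · intro x hx; rw [interior_Ici] at hx
      have h1 := hest x (le_of_lt hx)
      have h2 := hs0 x (le_of_lt hx)
      show (∑ j, σ j * deriv (deriv (u j)) x) ≤ 0
      nlinarith [mul_nonneg (le_of_lt (show (0:ℝ) < m / (2 * (N:ℝ)^3) by positivity))
        (pow_nonneg h2 3)]
  have hmonoS : MonotoneOn s (Set.Ici T) := monotoneOn_of_concave_nonneg hconc hs0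
  -- s vanishes identically on [T, ∞)
  have hszero : ∀ t, T ≤ t → s t = 0 := by
    intro t₀ ht₀
    by_contra h0
    have hd : 0 < s t₀ := lt_of_le_of_ne (hs0 t₀ ht₀) (Ne.symm h0)
    set c : ℝ := m / (2 * (N:ℝ)^3) with hcdef
    have hcpos : 0 < c := by rw [hcdef]; positivity
    set d : ℝ := s t₀ with hddef
    have hdpos : 0 < d := hd
    have hge : ∀ t, t₀ ≤ t → d ≤ s t := fun t htt =>
      hmonoS (Set.mem_Ici.2 ht₀) (Set.mem_Ici.2 (le_trans ht₀ htt)) htt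
    have ht₀pos : 0 < t₀ := lt_of_lt_of_le hTpos ht₀
    set g : ℝ → ℝ := fun t => s t + c * d^3 / 2 * ((t - t₀) * (t - t₀)) with hgdef
    have hgconc : ConcaveOn ℝ (Set.Ici t₀) g := by
      refine concaveOn_of_hasDerivWithinAt2_nonpos (convex_Ici t₀)
        (f' := fun x => (∑ j, σ j * deriv (u j) x)
          + c * d^3 / 2 * (1 * (x - t₀) + (x - t₀) * 1))
        (f'' := fun x => (∑ j, σ j * deriv (deriv (u j)) x)
          + c * d^3 / 2 * (1 * 1 + 1 * 1)) ?_ ?_ ?_ ?_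
      · refine ContinuousOn.add (hscont.mono (Set.Ici_subset_Ici.2 ht₀)) ?_
        exact (continuous_const.mul ((continuous_id.sub continuous_const).mul
          (continuous_id.sub continuous_const))).continuousOn
      · intro x hx; rw [interior_Ici] at hx
        have hx0 : 0 < x := lt_trans ht₀pos hx
        exact ((hsD x hx0).add ((((hasDerivAt_id x).sub_const t₀).mul
          ((hasDerivAt_id x).sub_const t₀)).const_mul (c * d^3 / 2))).hasDerivWithinAt
      · intro x hx; rw [interior_Ici] at hx
        have hx0 : 0 < x := lt_trans ht₀pos hx
        exact ((hsD' x hx0).add (((((hasDerivAt_id x).sub_const t₀).const_mul 1).add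
          (((hasDerivAt_id x).sub_const t₀).mul_const 1)).const_mul
          (c * d^3 / 2))).hasDerivWithinAt
      · intro x hx; rw [interior_Ici] at hx
        have hxT : T ≤ x := le_trans ht₀ (le_of_lt hx)
        have h1 := hest x hxT
        have h2 := hge x (le_of_lt hx)
        have h3 : d^3 ≤ (s x)^3 := pow_le_pow_left₀ (le_of_lt hd) h2 3
        have h4 := mul_le_mul_of_nonneg_left h3 (le_of_lt hcpos)
        show (∑ j, σ j * deriv (deriv (u j)) x) + c * d^3 / 2 * (1 * 1 + 1 * 1) ≤ 0
        nlinarith [h1, h4]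
    have hR2pos : 0 < 8 * ((N:ℝ) + 1) / (c * d^3) := by positivity
    set R : ℝ := Real.sqrt (8 * ((N:ℝ) + 1) / (c * d^3)) with hRdef
    have hRpos : 0 < R := Real.sqrt_pos.2 hR2pos
    have hRR : R * R = 8 * ((N:ℝ) + 1) / (c * d^3) := Real.mul_self_sqrt (le_of_lt hR2pos)
    have hmid := hgconc.2 (Set.mem_Ici.2 (le_refl t₀))
      (Set.mem_Ici.2 (show t₀ ≤ t₀ + R by linarith))
      (by norm_num : (0:ℝ) ≤ 1/2) (by norm_num : (0:ℝ) ≤ 1/2) (by norm_num)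
    simp only [smul_eq_mul] at hmid
    have hmideq : (1:ℝ)/2 * t₀ + 1/2 * (t₀ + R) = t₀ + R/2 := by ring
    rw [hmideq] at hmid
    have hgt₀ : g t₀ = d := by
      rw [hddef]
      show s t₀ + c * d^3 / 2 * ((t₀ - t₀) * (t₀ - t₀)) = s t₀
      ring
    have e1 : g (t₀ + R) = s (t₀ + R) + c * d^3 / 2 * (R * R) := by
      show s (t₀ + R) + c * d^3 / 2 * ((t₀ + R - t₀) * (t₀ + R - t₀)) = _
      ring
    have e2 : g (t₀ + R/2) = s (t₀ + R/2) + c * d^3 / 2 * (R/2 * (R/2)) := by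
      show s (t₀ + R/2) + c * d^3 / 2 * ((t₀ + R/2 - t₀) * (t₀ + R/2 - t₀)) = _
      ring
    have h5 : c * d^3 / 2 * (R * R) = 4 * ((N:ℝ) + 1) := by
      rw [hRR]; field_simp; ring
    have h6 : c * d^3 / 2 * (R/2 * (R/2)) = (N:ℝ) + 1 := by
      have hq : R/2 * (R/2) = (R * R) / 4 := by ring
      rw [hq, hRR]; field_simp; ring
    have hb1 : d ≤ s (t₀ + R) := hge (t₀ + R) (by linarith)
    have hb2 : s (t₀ + R/2) ≤ (N:ℝ) := hsN (t₀ + R/2) (by linarith)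
    rw [hgt₀, e1, e2, h5, h6] at hmid
    linarith
  -- hence all u j vanish on [T, ∞)
  have huzero : ∀ j t, T ≤ t → u j t = 0 := by
    intro j t ht
    have hsum : ∑ i, σ i * u i t = 0 := hszero t ht
    have := (Finset.sum_eq_zero_iff_of_nonneg (fun i _ => hv i t ht)).1 hsum j (Finset.mem_univ j)
    rcases mul_eq_zero.1 this with h | h
    · exact absurd h (hσne j)
    · exact h
  -- energy
  have hED : ∀ x : ℝ, 0 < x → HasDerivAt (fun t =>
      ∑ j, deriv (u j) t * deriv (u j) t / 2
        + (∑ j, μ j * (u j t * u j t * u j t * u j t)) / 4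
        + (∑ j, ∑ i ∈ Finset.univ.erase j, B i j * (u i t * u i t) * (u j t * u j t)) / 4) 0 x := by
    intro x hx
    have h1 : HasDerivAt (fun t => ∑ j, deriv (u j) t * deriv (u j) t / 2)
        (∑ j, (deriv (deriv (u j)) x * deriv (u j) x
          + deriv (u j) x * deriv (deriv (u j)) x) / 2) x :=
      HasDerivAt.fun_sum fun j _ => ((hu'' j x hx).mul (hu'' j x hx)).div_const 2
    have h2 : HasDerivAt (fun t => (∑ j, μ j * (u j t * u j t * u j t * u j t)) / 4)
        ((∑ j, μ j * (((deriv (u j) x * u j x + u j x * deriv (u j) x) * u j x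
          + u j x * u j x * deriv (u j) x) * u j x
          + u j x * u j x * u j x * deriv (u j) x)) / 4) x :=
      (HasDerivAt.fun_sum fun j _ =>
        ((((hu' j x hx).mul (hu' j x hx)).mul (hu' j x hx)).mul (hu' j x hx)).const_mul
          (μ j)).div_const 4
    have h3 : HasDerivAt (fun t =>
        (∑ j, ∑ i ∈ Finset.univ.erase j, B i j * (u i t * u i t) * (u j t * u j t)) / 4)
        ((∑ j, ∑ i ∈ Finset.univ.erase j,
          (B i j * (deriv (u i) x * u i x + u i x * deriv (u i) x) * (u j x * u j x)
            + B i j * (u i x * u i x) * (deriv (u j) x * u j x + u j x * deriv (u j) x))) / 4)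
        x :=
      (HasDerivAt.fun_sum fun j _ => HasDerivAt.fun_sum fun i _ =>
        (((hu' i x hx).mul (hu' i x hx)).const_mul (B i j)).mul
          ((hu' j x hx).mul (hu' j x hx))).div_const 4
    have hbig := (h1.add h2).add h3
    have hswap : ∑ j, ∑ i ∈ Finset.univ.erase j, B i j * (u i x * deriv (u i) x) * u j x ^ 2
        = ∑ j, ∑ i ∈ Finset.univ.erase j, B i j * u i x ^ 2 * (u j x * deriv (u j) x) :=
      double_swap B hBsymm (fun i => u i x * deriv (u i) x) (fun i => u i x ^ 2)
    have e1 : ∑ j, (deriv (deriv (u j)) x * deriv (u j) x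
          + deriv (u j) x * deriv (deriv (u j)) x) / 2
        = -(∑ j, μ j * (u j x ^ 3 * deriv (u j) x))
          - ∑ j, ∑ i ∈ Finset.univ.erase j, B i j * u i x ^ 2 * (u j x * deriv (u j) x) := by
      calc ∑ j, (deriv (deriv (u j)) x * deriv (u j) x
            + deriv (u j) x * deriv (deriv (u j)) x) / 2
          = ∑ j, (-(μ j * (u j x ^ 3 * deriv (u j) x))
            + -(∑ i ∈ Finset.univ.erase j, B i j * u i x ^ 2 * (u j x * deriv (u j) x))) := by
            refine Finset.sum_congr rfl fun j _ => ?_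
            rw [hodeD j x hx]
            have hinner : (∑ i ∈ Finset.univ.erase j, B i j * u i x ^ 2 * u j x)
                * deriv (u j) x
                = ∑ i ∈ Finset.univ.erase j, B i j * u i x ^ 2 * (u j x * deriv (u j) x) := by
              rw [Finset.sum_mul]
              exact Finset.sum_congr rfl fun i _ => by ring
            rw [← hinner]; ring
        _ = _ := by rw [Finset.sum_add_distrib, Finset.sum_neg_distrib,
              Finset.sum_neg_distrib]; ring
    have e2 : (∑ j, μ j * (((deriv (u j) x * u j x + u j x * deriv (u j) x) * u j x
          + u j x * u j x * deriv (u j) x) * u j x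
          + u j x * u j x * u j x * deriv (u j) x)) / 4
        = ∑ j, μ j * (u j x ^ 3 * deriv (u j) x) := by
      have hc : ∑ j, μ j * (((deriv (u j) x * u j x + u j x * deriv (u j) x) * u j x
            + u j x * u j x * deriv (u j) x) * u j x
            + u j x * u j x * u j x * deriv (u j) x)
          = ∑ j, 4 * (μ j * (u j x ^ 3 * deriv (u j) x)) :=
        Finset.sum_congr rfl fun j _ => by ring
      rw [hc, ← Finset.mul_sum]; ring
    have e3 : (∑ j, ∑ i ∈ Finset.univ.erase j,
          (B i j * (deriv (u i) x * u i x + u i x * deriv (u i) x) * (u j x * u j x)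
            + B i j * (u i x * u i x) * (deriv (u j) x * u j x + u j x * deriv (u j) x))) / 4
        = ∑ j, ∑ i ∈ Finset.univ.erase j, B i j * u i x ^ 2 * (u j x * deriv (u j) x) := by
      have hc : ∑ j, ∑ i ∈ Finset.univ.erase j,
            (B i j * (deriv (u i) x * u i x + u i x * deriv (u i) x) * (u j x * u j x)
              + B i j * (u i x * u i x) * (deriv (u j) x * u j x + u j x * deriv (u j) x))
          = ∑ j, ∑ i ∈ Finset.univ.erase j,
            (2 * (B i j * (u i x * deriv (u i) x) * u j x ^ 2)
              + 2 * (B i j * u i x ^ 2 * (u j x * deriv (u j) x))) :=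
        Finset.sum_congr rfl fun j _ => Finset.sum_congr rfl fun i _ => by ring
      have hsplit : ∑ j, ∑ i ∈ Finset.univ.erase j,
            (2 * (B i j * (u i x * deriv (u i) x) * u j x ^ 2)
              + 2 * (B i j * u i x ^ 2 * (u j x * deriv (u j) x)))
          = 2 * (∑ j, ∑ i ∈ Finset.univ.erase j, B i j * (u i x * deriv (u i) x) * u j x ^ 2)
            + 2 * (∑ j, ∑ i ∈ Finset.univ.erase j,
              B i j * u i x ^ 2 * (u j x * deriv (u j) x)) := by
        rw [Finset.mul_sum, Finset.mul_sum, ← Finset.sum_add_distrib]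
        refine Finset.sum_congr rfl fun j _ => ?_
        rw [Finset.mul_sum, Finset.mul_sum, ← Finset.sum_add_distrib]
      rw [hc, hsplit, hswap]; ring
    have hval : (∑ j, (deriv (deriv (u j)) x * deriv (u j) x
          + deriv (u j) x * deriv (deriv (u j)) x) / 2
        + (∑ j, μ j * (((deriv (u j) x * u j x + u j x * deriv (u j) x) * u j x
          + u j x * u j x * deriv (u j) x) * u j x
          + u j x * u j x * u j x * deriv (u j) x)) / 4)
        + (∑ j, ∑ i ∈ Finset.univ.erase j,
          (B i j * (deriv (u i) x * u i x + u i x * deriv (u i) x) * (u j x * u j x)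
            + B i j * (u i x * u i x) * (deriv (u j) x * u j x + u j x * deriv (u j) x))) / 4
        = 0 := by
      rw [e1, e2, e3]; ring
    rw [hval] at hbig
    exact hbig
  have hEconst : ∀ a b : ℝ, 0 < a → a ≤ b →
      (fun t => ∑ j, deriv (u j) t * deriv (u j) t / 2
        + (∑ j, μ j * (u j t * u j t * u j t * u j t)) / 4
        + (∑ j, ∑ i ∈ Finset.univ.erase j, B i j * (u i t * u i t) * (u j t * u j t)) / 4) b = (fun t => ∑ j, deriv (u j) t * deriv (u j) t / 2
        + (∑ j, μ j * (u j t * u j t * u j t * u j t)) / 4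
        + (∑ j, ∑ i ∈ Finset.univ.erase j, B i j * (u i t * u i t) * (u j t * u j t)) / 4) a := by
    intro a b ha hab
    exact constant_of_has_deriv_right_zero
      (fun y hy => ((hED y (lt_of_lt_of_le ha hy.1)).continuousAt).continuousWithinAt)
      (fun y hy => (hED y (lt_of_lt_of_le ha hy.1)).hasDerivWithinAt) b ⟨hab, le_refl b⟩
  have hE1 : (fun t => ∑ j, deriv (u j) t * deriv (u j) t / 2
        + (∑ j, μ j * (u j t * u j t * u j t * u j t)) / 4
        + (∑ j, ∑ i ∈ Finset.univ.erase j, B i j * (u i t * u i t) * (u j t * u j t)) / 4) (T + 1) = 0 := by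
    have hu1 : ∀ j, u j (T + 1) = 0 := fun j => huzero j (T + 1) (by linarith)
    have hd1 : ∀ j, deriv (u j) (T + 1) = 0 := by
      intro j
      have he : u j =ᶠ[nhds (T + 1)] (fun _ => (0:ℝ)) := by
        filter_upwards [isOpen_Ioi.mem_nhds (show T < T + 1 by linarith)] with y hy
        exact huzero j y (le_of_lt hy)
      rw [he.deriv_eq, deriv_const]
    simp [hu1, hd1]
  have hEzero : ∀ x : ℝ, 0 < x → (fun t => ∑ j, deriv (u j) t * deriv (u j) t / 2
        + (∑ j, μ j * (u j t * u j t * u j t * u j t)) / 4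
        + (∑ j, ∑ i ∈ Finset.univ.erase j, B i j * (u i t * u i t) * (u j t * u j t)) / 4) x = 0 := by
    intro x hx
    rcases le_total x (T + 1) with hc | hc
    · have h2 := hEconst x (T + 1) hx hc
      linarith [h2, hE1]
    · have h2 := hEconst (T + 1) x (by linarith) hc
      linarith [h2, hE1]
  -- conclude
  intro j t ht
  rcases eq_or_lt_of_le (Set.mem_Ici.1 ht) with h0 | hpos
  · rw [← h0]; exact hu0 j
  have hE' : ∑ j, deriv (u j) t * deriv (u j) t / 2
      + (∑ j, μ j * (u j t * u j t * u j t * u j t)) / 4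
      + (∑ j, ∑ i ∈ Finset.univ.erase j, B i j * (u i t * u i t) * (u j t * u j t)) / 4
      = 0 := hEzero t hpos
  set M : ℝ := Finset.univ.sup' hne (fun i => |u i t|) with hMdef
  have hM : ∀ i, |u i t| ≤ M := fun i => Finset.le_sup' (fun i => |u i t|) (Finset.mem_univ i)
  have hM0 : 0 ≤ M := le_trans (abs_nonneg _) (hM ⟨0, hNpos⟩)
  have hK : 0 ≤ ∑ j, deriv (u j) t * deriv (u j) t / 2 :=
    Finset.sum_nonneg fun j _ => div_nonneg (mul_self_nonneg _) (by norm_num)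
  have part1 : m * M ^ 4 ≤ ∑ j, μ j * (u j t * u j t * u j t * u j t) := by
    obtain ⟨j₀, _, hj₀⟩ := Finset.exists_mem_eq_sup' hne (fun i => |u i t|)
    have hM4 : M ^ 4 = u j₀ t * u j₀ t * u j₀ t * u j₀ t := by
      rw [hMdef, hj₀, show |u j₀ t| ^ 4 = |u j₀ t| * |u j₀ t| * (|u j₀ t| * |u j₀ t|) from by
        ring, abs_mul_abs_self]
      ring
    have hstep : m * M ^ 4 ≤ μ j₀ * (u j₀ t * u j₀ t * u j₀ t * u j₀ t) := by
      rw [hM4]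
      refine mul_le_mul_of_nonneg_right (hmle j₀) ?_
      nlinarith [mul_self_nonneg (u j₀ t * u j₀ t), mul_self_nonneg (u j₀ t)]
    exact le_trans hstep (Finset.single_le_sum
      (f := fun i => μ i * (u i t * u i t * u i t * u i t))
      (fun i _ => mul_nonneg (le_of_lt (hμ i)) (by
        nlinarith [mul_self_nonneg (u i t * u i t), mul_self_nonneg (u i t)]))
      (Finset.mem_univ j₀))
  have part2 : |∑ j, ∑ i ∈ Finset.univ.erase j, B i j * (u i t * u i t) * (u j t * u j t)|
      ≤ (N:ℝ)^2 * (ε * M ^ 4) := by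
    refine abs_double_sum_le _ (fun j i hij => ?_) (by positivity)
    have h1 : |B i j * (u i t * u i t) * (u j t * u j t)|
        = |B i j| * (|u i t| * |u i t|) * (|u j t| * |u j t|) := by
      rw [abs_mul, abs_mul, abs_mul, abs_mul]
    rw [h1]
    have a1 : |u i t| * |u i t| ≤ M * M := mul_le_mul (hM i) (hM i) (abs_nonneg _) hM0
    have a2 : |u j t| * |u j t| ≤ M * M := mul_le_mul (hM j) (hM j) (abs_nonneg _) hM0
    calc |B i j| * (|u i t| * |u i t|) * (|u j t| * |u j t|)
        ≤ ε * (M * M) * (M * M) := by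
          refine mul_le_mul (mul_le_mul (le_of_lt (hBsmall i j hij)) a1
            (mul_nonneg (abs_nonneg _) (abs_nonneg _)) (le_of_lt hεpos)) a2
            (mul_nonneg (abs_nonneg _) (abs_nonneg _)) ?_
          positivity
      _ = ε * M ^ 4 := by ring
  have hN4 : (N:ℝ)^2 * (ε * M ^ 4) = (m / 2) * M ^ 4 := by linear_combination M ^ 4 * hεN2
  rw [hN4] at part2
  have hlow := (abs_le.1 part2).1
  have hM4le : m * M ^ 4 ≤ 0 := by linarith
  have hM4 : M ^ 4 = 0 := by nlinarith [pow_nonneg hM0 4]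
  have hMz : M = 0 := by
    have := pow_eq_zero_iff (n := 4) (by norm_num) |>.1 hM4
    exact this
  have : |u j t| ≤ 0 := by rw [← hMz]; exact hM j
  exact abs_eq_zero.1 (le_antisymm this (abs_nonneg _))
end
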